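/- (Generalized Artin lemma) Let G be a profinite group acting faithfully by automorphisms on a division ring h such that the stabilizer of every element of h is open in G. Let k = h^G. If h/k is an outer extension (the only inner automorphism of h fixing k pointwise is the identity), then h/k is an algebraic Galois extension and Gal(h/k) ≅ G as profinite groups. -/

import Mathlib

open Finset

set_option linter.unusedSectionVars false
set_option maxHeartbeats 1000000
set_option synthInstance.maxHeartbeats 400000

namespace ArtinLemmaAux

lemma exists_nonzero_solution {R : Type*} [DivisionRing R] {ι₁ ι₂ : Type*}
    [Fintype ι₁] [Fintype ι₂] (hlt : Fintype.card ι₂ < Fintype.card ι₁)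
    (A : ι₂ → ι₁ → R) :
    ∃ c : ι₁ → R, (∃ i, c i ≠ 0) ∧ ∀ j, ∑ i, c i * A j i = 0 := by
  classical
  set v : ι₁ → (ι₂ → R) := fun i j => A j i with hv
  have hni : ¬ LinearIndependent R v := by
    intro hli
    have := hli.fintype_card_le_finrank
    rw [Module.finrank_pi] at this
    omega
  rw [Fintype.not_linearIndependent_iff] at hni
  obtain ⟨g, hg0, i, hgi⟩ := hni
  refine ⟨g, ⟨i, hgi⟩, fun j => ?_⟩
  have := congrFun hg0 j
  simpa using this

lemma exists_nonzero_solution_right {R : Type*} [DivisionRing R] {ι₁ ι₂ : Type*}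
    [Fintype ι₁] [Fintype ι₂] (hlt : Fintype.card ι₂ < Fintype.card ι₁)
    (A : ι₂ → ι₁ → R) :
    ∃ c : ι₁ → R, (∃ i, c i ≠ 0) ∧ ∀ j, ∑ i, A j i * c i = 0 := by
  obtain ⟨c, ⟨i, hi⟩, hc⟩ := exists_nonzero_solution (R := Rᵐᵒᵖ) hlt
    (fun j i => MulOpposite.op (A j i))
  refine ⟨fun i => (c i).unop, ⟨i, fun he => hi (by
    simpa using congrArg MulOpposite.op he)⟩, fun j => ?_⟩
  have h1 := hc j
  have h2 : MulOpposite.op (∑ i, A j i * (c i).unop) = 0 := by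
    calc MulOpposite.op (∑ i, A j i * (c i).unop)
        = ∑ i, MulOpposite.op (A j i * (c i).unop) :=
          map_sum MulOpposite.opAddEquiv _ _
      _ = ∑ i, c i * MulOpposite.op (A j i) :=
          Finset.sum_congr rfl fun i _ => by simp [MulOpposite.op_mul]
      _ = 0 := h1
  simpa using congrArg MulOpposite.unop h2

lemma ringHom_indep {R h : Type*} [Semiring R] [DivisionRing h]
    (Φ : Finset (R →+* h))
    (hrel : ∀ χ ∈ Φ, ∀ χ' ∈ Φ,
      (∃ u : h, u ≠ 0 ∧ ∀ z, χ z = u * χ' z * u⁻¹) → χ = χ')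
    (a : (R →+* h) → h) (ha : ∀ z, ∑ χ ∈ Φ, a χ * χ z = 0) :
    ∀ χ ∈ Φ, a χ = 0 := by
  classical
  obtain ⟨n, hn⟩ : ∃ n, Φ.card = n := ⟨_, rfl⟩
  induction n using Nat.strong_induction_on generalizing Φ a with
  | _ n IH =>
  by_contra hcon
  push_neg at hcon
  obtain ⟨χ₁, hχ₁, ha₁⟩ := hcon
  by_cases hzero : ∃ χ₀ ∈ Φ, a χ₀ = 0
  · obtain ⟨χ₀, hχ₀, ha₀⟩ := hzero
    have hne : χ₁ ≠ χ₀ := fun he => ha₁ (he ▸ ha₀)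
    have hcard : (Φ.erase χ₀).card < n := hn ▸ Finset.card_erase_lt_of_mem hχ₀
    have := IH _ hcard (Φ.erase χ₀)
      (fun χ hχ χ' hχ' => hrel χ (Finset.mem_of_mem_erase hχ) χ' (Finset.mem_of_mem_erase hχ'))
      a (fun z => by
        have h1 := ha z
        rwa [← Finset.add_sum_erase Φ _ hχ₀, ha₀, zero_mul, zero_add] at h1) rfl
      χ₁ (Finset.mem_erase.2 ⟨hne, hχ₁⟩)
    exact ha₁ this
  · push_neg at hzero
    by_cases hsing : ∀ χ ∈ Φ, χ = χ₁
    · have hΦ : Φ = {χ₁} := Finset.eq_singleton_iff_unique_mem.2 ⟨hχ₁, hsing⟩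
      have h1 := ha 1
      rw [hΦ, Finset.sum_singleton, map_one, mul_one] at h1
      exact ha₁ h1
    · push_neg at hsing
      obtain ⟨χ₀, hχ₀, hne⟩ := hsing
      have ha₀ := hzero χ₀ hχ₀
      have key : ∀ y, ∀ χ ∈ Φ.erase χ₀,
          a χ * χ y - a χ₀ * χ₀ y * (a χ₀)⁻¹ * a χ = 0 := by
        intro y
        have hcard : (Φ.erase χ₀).card < n := hn ▸ Finset.card_erase_lt_of_mem hχ₀
        refine IH _ hcard (Φ.erase χ₀)
          (fun χ hχ χ' hχ' => hrel χ (Finset.mem_of_mem_erase hχ) χ' (Finset.mem_of_mem_erase hχ'))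
          (fun χ => a χ * χ y - a χ₀ * χ₀ y * (a χ₀)⁻¹ * a χ) (fun z => ?_) rfl
      -- full sum vanishes
        have h2 : ∑ χ ∈ Φ, (a χ * χ y - a χ₀ * χ₀ y * (a χ₀)⁻¹ * a χ) * χ z = 0 := by
          have e1 : ∑ χ ∈ Φ, a χ * χ (y * z) = 0 := ha (y * z)
          have e2 : ∑ χ ∈ Φ, a χ * χ z = 0 := ha z
          calc ∑ χ ∈ Φ, (a χ * χ y - a χ₀ * χ₀ y * (a χ₀)⁻¹ * a χ) * χ z
              = ∑ χ ∈ Φ, (a χ * χ (y * z) - a χ₀ * χ₀ y * (a χ₀)⁻¹ * (a χ * χ z)) := by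
                refine Finset.sum_congr rfl fun χ _ => ?_
                rw [map_mul, sub_mul, mul_assoc (a χ), mul_assoc (a χ₀ * χ₀ y * (a χ₀)⁻¹)]
            _ = ∑ χ ∈ Φ, a χ * χ (y * z)
                - a χ₀ * χ₀ y * (a χ₀)⁻¹ * ∑ χ ∈ Φ, a χ * χ z := by
                rw [Finset.sum_sub_distrib, Finset.mul_sum]
            _ = 0 := by rw [e1, e2, mul_zero, sub_zero]
        have h3 : (a χ₀ * χ₀ y - a χ₀ * χ₀ y * (a χ₀)⁻¹ * a χ₀) * χ₀ z = 0 := by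
          rw [mul_assoc (a χ₀ * χ₀ y), inv_mul_cancel₀ ha₀, mul_one, sub_self, zero_mul]
        rw [← Finset.add_sum_erase Φ _ hχ₀, h3, zero_add] at h2
        exact h2
      -- derive inner relation between χ₁ and χ₀
      refine hne (hrel χ₁ hχ₁ χ₀ hχ₀ ⟨(a χ₁)⁻¹ * a χ₀,
        mul_ne_zero (inv_ne_zero ha₁) ha₀, fun y => ?_⟩).symm
      have e : a χ₁ * χ₁ y = a χ₀ * χ₀ y * (a χ₀)⁻¹ * a χ₁ :=
        sub_eq_zero.mp (key y χ₁ (Finset.mem_erase.2 ⟨fun he => hne he.symm, hχ₁⟩))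
      have e2 : χ₁ y = (a χ₁)⁻¹ * (a χ₀ * χ₀ y * (a χ₀)⁻¹ * a χ₁) := by
        rw [← e, ← mul_assoc, inv_mul_cancel₀ ha₁, one_mul]
      rw [e2, mul_inv_rev, inv_inv]
      noncomm_ring


section Setup
variable {G : Type*} [Group G] {h : Type*} [DivisionRing h] [MulSemiringAction G h]

def resHom (G : Type*) [Group G] (h : Type*) [DivisionRing h] [MulSemiringAction G h]
    (D : Subfield h) (σ : G) : ↥D →+* h :=
  (MulSemiringAction.toRingHom G h σ).comp D.subtype

lemma resHom_apply (D : Subfield h) (σ : G) (z : ↥D) : resHom G h D σ z = σ • (z : h) := rfl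

lemma dep_left (D : Subfield h) (Φ₀ : Finset (↥D →+* h))
    (hcov : ∀ σ : G, resHom G h D σ ∈ Φ₀)
    (u : Fin (Φ₀.card + 1) → ↥D) :
    ∃ c : Fin (Φ₀.card + 1) → h, (∀ i, ∀ g : G, g • c i = c i) ∧
      (∑ i, c i * (u i : h) = 0) ∧ (∃ i, c i ≠ 0) := by
  classical
  obtain ⟨c₀, hc₀ne, hc₀⟩ := exists_nonzero_solution
    (R := h) (ι₁ := Fin (Φ₀.card + 1)) (ι₂ := ↥Φ₀)
    (by simp [Fintype.card_coe]) (fun χ i => (χ : ↥D →+* h) (u i))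
  set P : (Fin (Φ₀.card + 1) → h) → Prop :=
    fun c => (∀ σ : G, ∑ i, c i * (σ • (u i : h)) = 0) ∧ ∃ i, c i ≠ 0 with hP
  set supp : (Fin (Φ₀.card + 1) → h) → ℕ :=
    fun c => (univ.filter fun i => c i ≠ 0).card with hsupp
  have hPc₀ : P c₀ := by
    refine ⟨fun σ => ?_, hc₀ne⟩
    have := hc₀ ⟨resHom G h D σ, hcov σ⟩
    simpa [resHom_apply] using this
  have H : ∃ m, ∃ c, P c ∧ supp c = m := ⟨_, c₀, hPc₀, rfl⟩
  obtain ⟨c, hPc, hmc⟩ := Nat.find_spec H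
  set m := Nat.find H with hm
  obtain ⟨j₀, hj₀⟩ := hPc.2
  -- normalize
  set c' : Fin (Φ₀.card + 1) → h := fun i => (c j₀)⁻¹ * c i with hc'
  have hc'j₀ : c' j₀ = 1 := inv_mul_cancel₀ hj₀
  have hc'zero : ∀ i, c' i = 0 ↔ c i = 0 := by
    intro i
    simp only [hc', mul_eq_zero, inv_eq_zero]
    exact ⟨fun hi => hi.resolve_left hj₀, Or.inr⟩
  have hPc' : P c' := by
    refine ⟨fun σ => ?_, j₀, by rw [hc'j₀]; exact one_ne_zero⟩
    calc ∑ i, c' i * σ • (u i : h) = (c j₀)⁻¹ * ∑ i, c i * σ • (u i : h) := by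
          rw [Finset.mul_sum]; exact Finset.sum_congr rfl fun i _ => by rw [hc', mul_assoc]
      _ = 0 := by rw [hPc.1 σ, mul_zero]
  have hsuppc' : supp c' = m := by
    have hfe : (univ.filter fun i => c' i ≠ 0) = (univ.filter fun i => c i ≠ 0) :=
      Finset.filter_congr fun i _ => not_congr (hc'zero i)
    rw [← hmc, hsupp]
    simp only [hfe]
  -- invariance
  have hfix : ∀ τ : G, ∀ i, τ • c' i = c' i := by
    intro τ
    set d : Fin (Φ₀.card + 1) → h := fun i => c' i - τ • c' i with hd
    have hdsol : ∀ σ : G, ∑ i, d i * (σ • (u i : h)) = 0 := by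
      intro σ
      have h2 : ∑ i, (τ • c' i) * (σ • (u i : h)) = 0 := by
        have h3 : ∑ i, (τ • c' i) * (σ • (u i : h))
            = τ • ∑ i, c' i * ((τ⁻¹ * σ) • (u i : h)) := by
          rw [Finset.smul_sum]
          refine Finset.sum_congr rfl fun i _ => ?_
          conv_rhs => rw [smul_mul', smul_smul, mul_inv_cancel_left]
        rw [h3, hPc'.1 (τ⁻¹ * σ), smul_zero]
      simp only [hd, sub_mul]
      rw [Finset.sum_sub_distrib, hPc'.1 σ, h2, sub_zero]
    have hdj₀ : d j₀ = 0 := by rw [hd]; simp [hc'j₀]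
    by_contra hcon
    push_neg at hcon
    obtain ⟨i₁, hi₁⟩ := hcon
    have hdne : d i₁ ≠ 0 := fun he => hi₁ (by rw [sub_eq_zero] at he; exact he.symm)
    have hPd : P d := ⟨hdsol, i₁, hdne⟩
    have hsub : (univ.filter fun i => d i ≠ 0)
        ⊆ (univ.filter fun i => c' i ≠ 0).erase j₀ := by
      intro i hi
      simp only [mem_filter, mem_univ, true_and] at hi
      refine Finset.mem_erase.2 ⟨fun he => hi (he ▸ hdj₀), ?_⟩
      simp only [mem_filter, mem_univ, true_and]
      intro he
      exact hi (by simp [hd, he, smul_zero])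
    have hlt : supp d < m := by
      calc supp d ≤ ((univ.filter fun i => c' i ≠ 0).erase j₀).card := Finset.card_le_card hsub
        _ < (univ.filter fun i => c' i ≠ 0).card := by
            apply Finset.card_erase_lt_of_mem
            simp [hc'j₀]
        _ = m := hsuppc'
    exact absurd (Nat.find_min' H ⟨d, hPd, rfl⟩) (by omega)
  refine ⟨c', fun i g => hfix g i, ?_, hPc'.2⟩
  have := hPc'.1 1
  simpa using this

lemma dep_right (D : Subfield h) (Φ₀ : Finset (↥D →+* h))
    (hcov : ∀ σ : G, resHom G h D σ ∈ Φ₀)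
    (u : Fin (Φ₀.card + 1) → ↥D) :
    ∃ c : Fin (Φ₀.card + 1) → h, (∀ i, ∀ g : G, g • c i = c i) ∧
      (∑ i, (u i : h) * c i = 0) ∧ (∃ i, c i ≠ 0) := by
  classical
  obtain ⟨c₀, hc₀ne, hc₀⟩ := exists_nonzero_solution_right
    (R := h) (ι₁ := Fin (Φ₀.card + 1)) (ι₂ := ↥Φ₀)
    (by simp [Fintype.card_coe]) (fun χ i => (χ : ↥D →+* h) (u i))
  set P : (Fin (Φ₀.card + 1) → h) → Prop :=
    fun c => (∀ σ : G, ∑ i, (σ • (u i : h)) * c i = 0) ∧ ∃ i, c i ≠ 0 with hP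
  set supp : (Fin (Φ₀.card + 1) → h) → ℕ :=
    fun c => (univ.filter fun i => c i ≠ 0).card with hsupp
  have hPc₀ : P c₀ := by
    refine ⟨fun σ => ?_, hc₀ne⟩
    have := hc₀ ⟨resHom G h D σ, hcov σ⟩
    simpa [resHom_apply] using this
  have H : ∃ m, ∃ c, P c ∧ supp c = m := ⟨_, c₀, hPc₀, rfl⟩
  obtain ⟨c, hPc, hmc⟩ := Nat.find_spec H
  set m := Nat.find H with hm
  obtain ⟨j₀, hj₀⟩ := hPc.2
  set c' : Fin (Φ₀.card + 1) → h := fun i => c i * (c j₀)⁻¹ with hc'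
  have hc'j₀ : c' j₀ = 1 := mul_inv_cancel₀ hj₀
  have hc'zero : ∀ i, c' i = 0 ↔ c i = 0 := by
    intro i
    simp only [hc', mul_eq_zero, inv_eq_zero]
    exact ⟨fun hi => hi.resolve_right hj₀, Or.inl⟩
  have hPc' : P c' := by
    refine ⟨fun σ => ?_, j₀, by rw [hc'j₀]; exact one_ne_zero⟩
    calc ∑ i, σ • (u i : h) * c' i = (∑ i, σ • (u i : h) * c i) * (c j₀)⁻¹ := by
          rw [Finset.sum_mul]; exact Finset.sum_congr rfl fun i _ => by rw [hc', mul_assoc]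
      _ = 0 := by rw [hPc.1 σ, zero_mul]
  have hsuppc' : supp c' = m := by
    have hfe : (univ.filter fun i => c' i ≠ 0) = (univ.filter fun i => c i ≠ 0) :=
      Finset.filter_congr fun i _ => not_congr (hc'zero i)
    rw [← hmc, hsupp]
    simp only [hfe]
  have hfix : ∀ τ : G, ∀ i, τ • c' i = c' i := by
    intro τ
    set d : Fin (Φ₀.card + 1) → h := fun i => c' i - τ • c' i with hd
    have hdsol : ∀ σ : G, ∑ i, (σ • (u i : h)) * d i = 0 := by
      intro σ
      have h2 : ∑ i, (σ • (u i : h)) * (τ • c' i) = 0 := by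
        have h3 : ∑ i, (σ • (u i : h)) * (τ • c' i)
            = τ • ∑ i, ((τ⁻¹ * σ) • (u i : h)) * c' i := by
          rw [Finset.smul_sum]
          refine Finset.sum_congr rfl fun i _ => ?_
          conv_rhs => rw [smul_mul', smul_smul, mul_inv_cancel_left]
        rw [h3, hPc'.1 (τ⁻¹ * σ), smul_zero]
      simp only [hd, mul_sub]
      rw [Finset.sum_sub_distrib, hPc'.1 σ, h2, sub_zero]
    have hdj₀ : d j₀ = 0 := by rw [hd]; simp [hc'j₀]
    by_contra hcon
    push_neg at hcon
    obtain ⟨i₁, hi₁⟩ := hcon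
    have hdne : d i₁ ≠ 0 := fun he => hi₁ (by rw [sub_eq_zero] at he; exact he.symm)
    have hPd : P d := ⟨hdsol, i₁, hdne⟩
    have hsub : (univ.filter fun i => d i ≠ 0)
        ⊆ (univ.filter fun i => c' i ≠ 0).erase j₀ := by
      intro i hi
      simp only [mem_filter, mem_univ, true_and] at hi
      refine Finset.mem_erase.2 ⟨fun he => hi (he ▸ hdj₀), ?_⟩
      simp only [mem_filter, mem_univ, true_and]
      intro he
      exact hi (by simp [hd, he, smul_zero])
    have hlt : supp d < m := by
      calc supp d ≤ ((univ.filter fun i => c' i ≠ 0).erase j₀).card := Finset.card_le_card hsub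
        _ < (univ.filter fun i => c' i ≠ 0).card := by
            apply Finset.card_erase_lt_of_mem
            simp [hc'j₀]
        _ = m := hsuppc'
    exact absurd (Nat.find_min' H ⟨d, hPd, rfl⟩) (by omega)
  refine ⟨c', fun i g => hfix g i, ?_, hPc'.2⟩
  have := hPc'.1 1
  simpa using this

lemma span_left (D : Subfield h) (Φ₀ : Finset (↥D →+* h))
    (hcov : ∀ σ : G, resHom G h D σ ∈ Φ₀) :
    ∃ s₀ : Finset h, s₀.card ≤ Φ₀.card ∧ (↑s₀ ⊆ (D : Set h)) ∧
      ∀ y : ↥D, ∃ c : h → h, (∀ z, ∀ g : G, g • c z = c z) ∧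
        (y : h) = ∑ z ∈ s₀, c z * z := by
  classical
  set n := Φ₀.card with hn
  set Indep : Finset h → Prop := fun s => (↑s ⊆ (D : Set h)) ∧
    ∀ c : h → h, (∀ z, ∀ g : G, g • c z = c z) →
      ∑ z ∈ s, c z * z = 0 → ∀ z ∈ s, c z = 0 with hIndep
  have hbound : ∀ s : Finset h, Indep s → s.card ≤ n := by
    intro s hs
    by_contra hgt
    push_neg at hgt
    obtain ⟨t, hts, htcard⟩ := Finset.exists_subset_card_eq (show n + 1 ≤ s.card from hgt)
    have htD : ↑t ⊆ (D : Set h) := fun z hz => hs.1 (hts hz)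
    set e : ↥t ≃ Fin (n + 1) := t.equivFin.trans (finCongr htcard) with he
    set u : Fin (n + 1) → ↥D := fun i => ⟨(e.symm i : h), htD (e.symm i).2⟩ with hu
    obtain ⟨c, hcfix, hcsum, i₀, hi₀⟩ := dep_left D Φ₀ hcov u
    set cc : h → h := fun z => if hz : z ∈ t then c (e ⟨z, hz⟩) else 0 with hcc
    have hccfix : ∀ z, ∀ g : G, g • cc z = cc z := by
      intro z g
      by_cases hz : z ∈ t
      · simp only [hcc, dif_pos hz]; exact hcfix _ g
      · simp only [hcc, dif_neg hz, smul_zero]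
    have hccsum : ∑ z ∈ s, cc z * z = 0 := by
      have h1 : ∑ z ∈ s, cc z * z = ∑ z ∈ t, cc z * z := by
        refine (Finset.sum_subset hts fun z _ hz => ?_).symm
        simp [hcc, dif_neg hz]
      have h2 : ∑ z ∈ t, cc z * z = ∑ w : ↥t, cc ↑w * ↑w := (Finset.sum_coe_sort t _).symm
      have h3 : ∑ w : ↥t, cc ↑w * ↑w = ∑ i : Fin (n + 1), cc ↑(e.symm i) * ↑(e.symm i) :=
        (Equiv.sum_comp e.symm (fun w : ↥t => cc ↑w * (↑w : h))).symm
      have h4 : ∀ i : Fin (n + 1), cc ↑(e.symm i) * (↑(e.symm i) : h) = c i * (u i : h) := by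
        intro i
        have hmem : ((e.symm i : ↥t) : h) ∈ t := (e.symm i).2
        simp only [hcc, dif_pos hmem]
        congr 1
        · congr 1
          rw [show (⟨↑(e.symm i), hmem⟩ : ↥t) = e.symm i from Subtype.ext rfl]
          exact e.apply_symm_apply i
      rw [h1, h2, h3]
      rw [Finset.sum_congr rfl fun i _ => h4 i]
      exact hcsum
    have := hs.2 cc hccfix hccsum ↑(e.symm i₀) (hts (e.symm i₀).2)
    rw [hcc] at this
    simp only [dif_pos (e.symm i₀).2] at this
    rw [show (⟨↑(e.symm i₀), (e.symm i₀).2⟩ : ↥t) = e.symm i₀ from Subtype.ext rfl,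
      e.apply_symm_apply] at this
    exact hi₀ this
  -- maximal independent family
  set Pm : ℕ → Prop := fun m => ∃ s : Finset h, Indep s ∧ s.card = m with hPm
  have hP0 : Pm 0 := ⟨∅, ⟨by simp, fun c _ _ z hz => absurd hz (Finset.notMem_empty z)⟩,
    Finset.card_empty⟩
  have hspec : Pm (Nat.findGreatest Pm n) := Nat.findGreatest_spec (Nat.zero_le n) hP0
  set m₀ := Nat.findGreatest Pm n with hm₀
  obtain ⟨s₀, hindep, hcard₀⟩ := hspec
  have hmax : ¬ Pm (m₀ + 1) := by
    intro hPm1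
    by_cases hle : m₀ + 1 ≤ n
    · exact Nat.findGreatest_is_greatest (Nat.lt_succ_self m₀) hle hPm1
    · obtain ⟨s, hs, hcard⟩ := hPm1
      have := hbound s hs
      omega
  refine ⟨s₀, hcard₀ ▸ Nat.findGreatest_le n, hindep.1, fun y => ?_⟩
  by_cases hy : (y : h) ∈ s₀
  · refine ⟨fun z => if z = ↑y then 1 else 0, fun z g => ?_, ?_⟩
    · by_cases hz : z = ↑y <;> simp [hz, smul_zero]
    · rw [Finset.sum_eq_single (↑y : h)]
      · simp
      · intro z hz hne; simp [hne]
      · intro hne; exact absurd hy hne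
  · set s₁ : Finset h := insert ↑y s₀ with hs₁
    have hs₁card : s₁.card = m₀ + 1 := by rw [hs₁, Finset.card_insert_of_notMem hy, hcard₀]
    have hs₁D : ↑s₁ ⊆ (D : Set h) := by
      rw [hs₁]; intro z hz
      rcases Finset.mem_insert.mp hz with rfl | hz
      · exact y.2
      · exact hindep.1 hz
    have hnindep : ¬ Indep s₁ := fun hind => hmax ⟨s₁, hind, hs₁card⟩
    simp only [hIndep] at hnindep
    push_neg at hnindep
    obtain ⟨c, hcfix, hcsum, z₁, hz₁, hz₁ne⟩ := hnindep hs₁D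
    have hcy : c ↑y ≠ 0 := by
      intro hcy
      have hsum₀ : ∑ z ∈ s₀, c z * z = 0 := by
        rw [hs₁, Finset.sum_insert hy, hcy, zero_mul, zero_add] at hcsum
        exact hcsum
      have hall := hindep.2 c hcfix hsum₀
      rcases Finset.mem_insert.mp hz₁ with rfl | hz₁'
      · exact hz₁ne hcy
      · exact hz₁ne (hall _ hz₁')
    have hyeq : (c ↑y) * ↑y = - ∑ z ∈ s₀, c z * z := by
      rw [hs₁, Finset.sum_insert hy] at hcsum
      exact eq_neg_of_add_eq_zero_left hcsum
    refine ⟨fun z => -((c ↑y)⁻¹ * c z), fun z g => ?_, ?_⟩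
    · rw [smul_neg, smul_mul', smul_inv'', hcfix ↑y g, hcfix z g]
    · have : ∑ z ∈ s₀, -((c ↑y)⁻¹ * c z) * z = -((c ↑y)⁻¹) * ∑ z ∈ s₀, c z * z := by
        rw [Finset.mul_sum]
        exact Finset.sum_congr rfl fun z _ => by rw [neg_mul, neg_mul, mul_assoc]
      have h5 : ∑ z ∈ s₀, c z * z = -(c ↑y * ↑y) := by rw [hyeq, neg_neg]
      rw [this, h5, neg_mul_neg, ← mul_assoc, inv_mul_cancel₀ hcy, one_mul]

lemma span_right (D : Subfield h) (Φ₀ : Finset (↥D →+* h))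
    (hcov : ∀ σ : G, resHom G h D σ ∈ Φ₀) :
    ∃ s₀ : Finset h, s₀.card ≤ Φ₀.card ∧ (↑s₀ ⊆ (D : Set h)) ∧
      ∀ y : ↥D, ∃ c : h → h, (∀ z, ∀ g : G, g • c z = c z) ∧
        (y : h) = ∑ z ∈ s₀, z * c z := by
  classical
  set n := Φ₀.card with hn
  set Indep : Finset h → Prop := fun s => (↑s ⊆ (D : Set h)) ∧
    ∀ c : h → h, (∀ z, ∀ g : G, g • c z = c z) →
      ∑ z ∈ s, z * c z = 0 → ∀ z ∈ s, c z = 0 with hIndep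
  have hbound : ∀ s : Finset h, Indep s → s.card ≤ n := by
    intro s hs
    by_contra hgt
    push_neg at hgt
    obtain ⟨t, hts, htcard⟩ := Finset.exists_subset_card_eq (show n + 1 ≤ s.card from hgt)
    have htD : ↑t ⊆ (D : Set h) := fun z hz => hs.1 (hts hz)
    set e : ↥t ≃ Fin (n + 1) := t.equivFin.trans (finCongr htcard) with he
    set u : Fin (n + 1) → ↥D := fun i => ⟨(e.symm i : h), htD (e.symm i).2⟩ with hu
    obtain ⟨c, hcfix, hcsum, i₀, hi₀⟩ := dep_right D Φ₀ hcov u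
    set cc : h → h := fun z => if hz : z ∈ t then c (e ⟨z, hz⟩) else 0 with hcc
    have hccfix : ∀ z, ∀ g : G, g • cc z = cc z := by
      intro z g
      by_cases hz : z ∈ t
      · simp only [hcc, dif_pos hz]; exact hcfix _ g
      · simp only [hcc, dif_neg hz, smul_zero]
    have hccsum : ∑ z ∈ s, z * cc z = 0 := by
      have h1 : ∑ z ∈ s, z * cc z = ∑ z ∈ t, z * cc z := by
        refine (Finset.sum_subset hts fun z _ hz => ?_).symm
        simp [hcc, dif_neg hz]
      have h2 : ∑ z ∈ t, z * cc z = ∑ w : ↥t, ↑w * cc ↑w := (Finset.sum_coe_sort t _).symm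
      have h3 : ∑ w : ↥t, ↑w * cc ↑w = ∑ i : Fin (n + 1), ↑(e.symm i) * cc ↑(e.symm i) :=
        (Equiv.sum_comp e.symm (fun w : ↥t => (↑w : h) * cc ↑w)).symm
      have h4 : ∀ i : Fin (n + 1), (↑(e.symm i) : h) * cc ↑(e.symm i) = (u i : h) * c i := by
        intro i
        have hmem : ((e.symm i : ↥t) : h) ∈ t := (e.symm i).2
        simp only [hcc, dif_pos hmem]
        congr 2
        rw [show (⟨↑(e.symm i), hmem⟩ : ↥t) = e.symm i from Subtype.ext rfl]
        exact e.apply_symm_apply i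
      rw [h1, h2, h3]
      rw [Finset.sum_congr rfl fun i _ => h4 i]
      exact hcsum
    have := hs.2 cc hccfix hccsum ↑(e.symm i₀) (hts (e.symm i₀).2)
    rw [hcc] at this
    simp only [dif_pos (e.symm i₀).2] at this
    rw [show (⟨↑(e.symm i₀), (e.symm i₀).2⟩ : ↥t) = e.symm i₀ from Subtype.ext rfl,
      e.apply_symm_apply] at this
    exact hi₀ this
  -- maximal independent family
  set Pm : ℕ → Prop := fun m => ∃ s : Finset h, Indep s ∧ s.card = m with hPm
  have hP0 : Pm 0 := ⟨∅, ⟨by simp, fun c _ _ z hz => absurd hz (Finset.notMem_empty z)⟩,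
    Finset.card_empty⟩
  have hspec : Pm (Nat.findGreatest Pm n) := Nat.findGreatest_spec (Nat.zero_le n) hP0
  set m₀ := Nat.findGreatest Pm n with hm₀
  obtain ⟨s₀, hindep, hcard₀⟩ := hspec
  have hmax : ¬ Pm (m₀ + 1) := by
    intro hPm1
    by_cases hle : m₀ + 1 ≤ n
    · exact Nat.findGreatest_is_greatest (Nat.lt_succ_self m₀) hle hPm1
    · obtain ⟨s, hs, hcard⟩ := hPm1
      have := hbound s hs
      omega
  refine ⟨s₀, hcard₀ ▸ Nat.findGreatest_le n, hindep.1, fun y => ?_⟩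
  by_cases hy : (y : h) ∈ s₀
  · refine ⟨fun z => if z = ↑y then 1 else 0, fun z g => ?_, ?_⟩
    · by_cases hz : z = ↑y <;> simp [hz, smul_zero]
    · rw [Finset.sum_eq_single (↑y : h)]
      · simp
      · intro z hz hne; simp [hne]
      · intro hne; exact absurd hy hne
  · set s₁ : Finset h := insert ↑y s₀ with hs₁
    have hs₁card : s₁.card = m₀ + 1 := by rw [hs₁, Finset.card_insert_of_notMem hy, hcard₀]
    have hs₁D : ↑s₁ ⊆ (D : Set h) := by
      rw [hs₁]; intro z hz
      rcases Finset.mem_insert.mp hz with rfl | hz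
      · exact y.2
      · exact hindep.1 hz
    have hnindep : ¬ Indep s₁ := fun hind => hmax ⟨s₁, hind, hs₁card⟩
    simp only [hIndep] at hnindep
    push_neg at hnindep
    obtain ⟨c, hcfix, hcsum, z₁, hz₁, hz₁ne⟩ := hnindep hs₁D
    have hcy : c ↑y ≠ 0 := by
      intro hcy
      have hsum₀ : ∑ z ∈ s₀, z * c z = 0 := by
        rw [hs₁, Finset.sum_insert hy, hcy, mul_zero, zero_add] at hcsum
        exact hcsum
      have hall := hindep.2 c hcfix hsum₀
      rcases Finset.mem_insert.mp hz₁ with rfl | hz₁'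
      · exact hz₁ne hcy
      · exact hz₁ne (hall _ hz₁')
    have hyeq : ↑y * (c ↑y) = - ∑ z ∈ s₀, z * c z := by
      rw [hs₁, Finset.sum_insert hy] at hcsum
      exact eq_neg_of_add_eq_zero_left hcsum
    refine ⟨fun z => -(c z * (c ↑y)⁻¹), fun z g => ?_, ?_⟩
    · rw [smul_neg, smul_mul', smul_inv'', hcfix ↑y g, hcfix z g]
    · have h6 : ∑ z ∈ s₀, z * -(c z * (c ↑y)⁻¹) = (∑ z ∈ s₀, z * c z) * -((c ↑y)⁻¹) := by
        rw [Finset.sum_mul]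
        exact Finset.sum_congr rfl fun z _ => by rw [mul_neg, mul_neg, mul_assoc]
      have h5 : ∑ z ∈ s₀, z * c z = -(↑y * c ↑y) := by rw [hyeq, neg_neg]
      rw [h6, h5, neg_mul_neg, mul_assoc, mul_inv_cancel₀ hcy, mul_one]


variable [TopologicalSpace G] [IsTopologicalGroup G] [CompactSpace G]

lemma fiber_open (hopen : ∀ x : h, IsOpen {σ : G | σ • x = x}) (x y : h) :
    IsOpen {σ : G | σ • x = y} := by
  rcases Set.eq_empty_or_nonempty {σ : G | σ • x = y} with he | ⟨σ₀, hσ₀⟩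
  · rw [he]; exact isOpen_empty
  · have : {σ : G | σ • x = y} = (fun σ => σ₀⁻¹ * σ) ⁻¹' {σ : G | σ • x = x} := by
      ext σ
      simp only [Set.mem_setOf_eq, Set.mem_preimage, mul_smul]
      constructor
      · intro hσ; rw [hσ, ← hσ₀, inv_smul_smul]
      · intro hσ; have := congrArg (σ₀ • ·) hσ
        simp only [smul_smul, mul_inv_cancel_left] at this
        rw [this, hσ₀]
    rw [this]
    exact (hopen x).preimage (continuous_mul_left σ₀⁻¹)

lemma orbit_finite (hopen : ∀ x : h, IsOpen {σ : G | σ • x = x}) (x : h) :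
    (Set.range fun σ : G => σ • x).Finite := by
  apply IsLocallyConstant.range_finite
  intro s
  have : (fun σ : G => σ • x) ⁻¹' s = ⋃ y ∈ s, {σ : G | σ • x = y} := by
    ext σ; simp
  rw [this]
  exact isOpen_biUnion (fun y _ => fiber_open hopen x y)

/-- The key construction: a `G`-stable subfield containing `S` and the fixed set,
on which `G` acts through finitely many ring homs. -/
lemma exists_subfield (hopen : ∀ x : h, IsOpen {σ : G | σ • x = x}) (S : Finset h) :
    ∃ D : Subfield h, (∀ x ∈ S, x ∈ D) ∧ ({y : h | ∀ g : G, g • y = y} ⊆ D) ∧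
      (Set.range (resHom G h D)).Finite := by
  classical
  set T : Set h := ⋃ x ∈ S, Set.range (fun σ : G => σ • x) with hT
  have hTfin : T.Finite := Set.Finite.biUnion S.finite_toSet (fun x _ => orbit_finite hopen x)
  have hNopen : IsOpen {σ : G | ∀ y ∈ T, σ • y = y} := by
    have : {σ : G | ∀ y ∈ T, σ • y = y} = ⋂ y ∈ T, {σ : G | σ • y = y} := by
      ext σ; simp
    rw [this]
    exact hTfin.isOpen_biInter (fun y _ => hopen y)
  set D : Subfield h :=
    { carrier := {z : h | ∀ σ : G, (∀ y ∈ T, σ • y = y) → σ • z = z}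
      mul_mem' := fun {a b} ha hb σ hσ => by rw [smul_mul', ha σ hσ, hb σ hσ]
      one_mem' := fun σ _ => smul_one σ
      add_mem' := fun {a b} ha hb σ hσ => by rw [smul_add, ha σ hσ, hb σ hσ]
      zero_mem' := fun σ _ => smul_zero σ
      neg_mem' := fun {a} ha σ hσ => by rw [smul_neg, ha σ hσ]
      inv_mem' := fun a ha σ hσ => by rw [smul_inv'', ha σ hσ] } with hD
  refine ⟨D, fun x hx σ hσ => hσ x ?_, fun y hy σ _ => hy σ, ?_⟩
  · exact Set.mem_biUnion hx ⟨1, one_smul G x⟩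
  · apply IsLocallyConstant.range_finite
    intro s
    have hfiber : ∀ φ : ↥D →+* h, IsOpen (resHom G h D ⁻¹' {φ}) := by
      intro φ
      rw [isOpen_iff_mem_nhds]
      intro σ₀ hσ₀
      have hsub : (fun σ => σ₀⁻¹ * σ) ⁻¹' {σ : G | ∀ y ∈ T, σ • y = y}
          ⊆ resHom G h D ⁻¹' {φ} := by
        intro σ hσ
        simp only [Set.mem_preimage, Set.mem_setOf_eq] at hσ
        simp only [Set.mem_preimage, Set.mem_singleton_iff] at hσ₀ ⊢
        rw [← hσ₀]
        ext z
        rw [resHom_apply, resHom_apply]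
        have : σ = σ₀ * (σ₀⁻¹ * σ) := by group
        rw [this, mul_smul]
        congr 1
        exact z.2 (σ₀⁻¹ * σ) hσ
      refine Filter.mem_of_superset ?_ hsub
      refine IsOpen.mem_nhds (hNopen.preimage (continuous_mul_left σ₀⁻¹)) ?_
      simp only [Set.mem_preimage, Set.mem_setOf_eq, inv_mul_cancel]
      exact fun y _ => one_smul G y
    have : resHom G h D ⁻¹' s = ⋃ φ ∈ s, resHom G h D ⁻¹' {φ} := by
      ext σ; simp
    rw [this]
    exact isOpen_biUnion (fun φ _ => hfiber φ)


end Setup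

end ArtinLemmaAux

open ArtinLemmaAux

/-- `x` is algebraic over the subset `k` of the division ring `h` : the subdivision ring
generated by `k` and `x` admits a finite family spanning it as a left and as a right
`k`-vector space. -/
def IsAlgebraicOverSet {h : Type*} [DivisionRing h] (k : Set h) (x : h) : Prop :=
  ∃ (N : ℕ) (b : Fin N → h),
    (∀ y ∈ Subfield.closure (insert x k), ∃ c : Fin N → h,
      (∀ i, c i ∈ k) ∧ y = ∑ i, c i * b i) ∧
    (∀ y ∈ Subfield.closure (insert x k), ∃ c : Fin N → h,
      (∀ i, c i ∈ k) ∧ y = ∑ i, b i * c i)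

/-- Generalized Artin lemma.  Let `G` be a profinite group acting faithfully by
automorphisms on a division ring `h`, with open stabilizers, and let `k = h^G`.  If `h/k`
is outer, then `h/k` is algebraic, Galois (`k` is the fixed field of `Aut(h/k)`), and
`Gal(h/k) ≅ G`: every automorphism of `h` fixing `k` pointwise is given by the action of a
unique element of `G`. -/
theorem generalized_artin_lemma
    (G : Type*) [Group G] [TopologicalSpace G] [IsTopologicalGroup G]
    [CompactSpace G] [T2Space G] [TotallyDisconnectedSpace G]
    (h : Type*) [DivisionRing h] [MulSemiringAction G h]
    (hfaithful : ∀ g : G, (∀ x : h, g • x = x) → g = 1)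
    (hopen : ∀ x : h, IsOpen {σ : G | σ • x = x})
    (houter : ∀ u : h, u ≠ 0 → (∀ a : h, (∀ g : G, g • a = a) → u * a = a * u) →
      ∀ x : h, u * x = x * u) :
    (∀ x : h, IsAlgebraicOverSet {y : h | ∀ g : G, g • y = y} x) ∧
    (∀ x : h, (∀ f : h ≃+* h, (∀ a : h, (∀ g : G, g • a = a) → f a = a) → f x = x) →
      ∀ g : G, g • x = x) ∧
    (∀ f : h ≃+* h, (∀ a : h, (∀ g : G, g • a = a) → f a = a) →
      ∃! g : G, ∀ x : h, f x = g • x) := by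
  classical
  refine ⟨?_, ?_, ?_⟩
  · -- (1) algebraicity
    intro x
    obtain ⟨D, hSD, hkD, hfin⟩ := exists_subfield hopen {x}
    set Φ₀ := hfin.toFinset with hΦ₀
    have hcov : ∀ σ : G, resHom G h D σ ∈ Φ₀ := fun σ => hfin.mem_toFinset.2 ⟨σ, rfl⟩
    obtain ⟨sL, _, hsLD, hspanL⟩ := span_left D Φ₀ hcov
    obtain ⟨sR, _, hsRD, hspanR⟩ := span_right D Φ₀ hcov
    have hxD : x ∈ D := hSD x (Finset.mem_singleton_self x)
    have hclos : Subfield.closure (insert x {y : h | ∀ g : G, g • y = y}) ≤ D :=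
      Subfield.closure_le.2 (Set.insert_subset_iff.2 ⟨hxD, hkD⟩)
    set bL : Fin sL.card → h := fun i => ((sL.equivFin.symm i : h)) with hbL
    set bR : Fin sR.card → h := fun i => ((sR.equivFin.symm i : h)) with hbR
    refine ⟨sL.card + sR.card, Fin.append bL bR, ?_, ?_⟩
    · intro y hy
      obtain ⟨c, hcfix, hre⟩ := hspanL ⟨y, hclos hy⟩
      have hre' : y = ∑ z ∈ sL, c z * z := hre
      refine ⟨Fin.append (fun i => c (bL i)) (fun _ => 0), fun i => ?_, ?_⟩
      · refine Fin.addCases (fun j => ?_) (fun j => ?_) i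
        · rw [Fin.append_left]; exact fun g => hcfix _ g
        · rw [Fin.append_right]; exact fun g => smul_zero g
      · rw [Fin.sum_univ_add]
        simp only [Fin.append_left, Fin.append_right, zero_mul,
          Finset.sum_const_zero, add_zero]
        calc y = ∑ z ∈ sL, c z * z := hre'
          _ = ∑ w : ↥sL, c ↑w * ↑w := (Finset.sum_coe_sort sL _).symm
          _ = ∑ j : Fin sL.card, c ↑(sL.equivFin.symm j) * ↑(sL.equivFin.symm j) :=
              (Equiv.sum_comp sL.equivFin.symm (fun w : ↥sL => c ↑w * (↑w : h))).symm
    · intro y hy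
      obtain ⟨c, hcfix, hre⟩ := hspanR ⟨y, hclos hy⟩
      have hre' : y = ∑ z ∈ sR, z * c z := hre
      refine ⟨Fin.append (fun _ => 0) (fun i => c (bR i)), fun i => ?_, ?_⟩
      · refine Fin.addCases (fun j => ?_) (fun j => ?_) i
        · rw [Fin.append_left]; exact fun g => smul_zero g
        · rw [Fin.append_right]; exact fun g => hcfix _ g
      · rw [Fin.sum_univ_add]
        simp only [Fin.append_left, Fin.append_right, mul_zero,
          Finset.sum_const_zero, zero_add]
        calc y = ∑ z ∈ sR, z * c z := hre'
          _ = ∑ w : ↥sR, ↑w * c ↑w := (Finset.sum_coe_sort sR _).symm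
          _ = ∑ j : Fin sR.card, ↑(sR.equivFin.symm j) * c ↑(sR.equivFin.symm j) :=
              (Equiv.sum_comp sR.equivFin.symm (fun w : ↥sR => (↑w : h) * c ↑w)).symm
  · -- (2) Galois
    intro x hx g
    exact hx (RingEquiv.mk ⟨(g • ·), (g⁻¹ • ·), fun z => inv_smul_smul g z,
      fun z => smul_inv_smul g z⟩ (smul_mul' g) (smul_add g)) (fun a ha => ha g)
  · -- (3) every automorphism over k comes from a unique element of G
    intro f hf
    have key : ∀ S : Finset h, ∃ g : G, ∀ x ∈ S, g • x = f x := by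
      intro S
      obtain ⟨D, hSD, hkD, hfin⟩ := exists_subfield hopen S
      set Φ₀ := hfin.toFinset with hΦ₀def
      have hcov : ∀ σ : G, resHom G h D σ ∈ Φ₀ := fun σ => hfin.mem_toFinset.2 ⟨σ, rfl⟩
      by_cases hcase : ∃ φ ∈ Φ₀, ∀ z : ↥D, f ↑z = φ z
      · obtain ⟨φ, hφ, heq⟩ := hcase
        obtain ⟨σ, rfl⟩ := hfin.mem_toFinset.1 hφ
        exact ⟨σ, fun x hx => (heq ⟨x, hSD x hx⟩).symm⟩
      · exfalso
        set χ₀ : ↥D →+* h := (f : h →+* h).comp D.subtype with hχ₀def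
        have hχ₀ : χ₀ ∉ Φ₀ := fun hmem => hcase ⟨χ₀, hmem, fun z => rfl⟩
        set Φ : Finset (↥D →+* h) := insert χ₀ Φ₀ with hΦdef
        have hfixk : ∀ χ ∈ Φ, ∀ a : h, (∀ g : G, g • a = a) → ∀ hz : a ∈ D,
            χ ⟨a, hz⟩ = a := by
          intro χ hχ a ha hz
          rcases Finset.mem_insert.mp hχ with rfl | hχ
          · exact hf a ha
          · obtain ⟨σ, rfl⟩ := hfin.mem_toFinset.1 hχ
            exact ha σ
        have hrel : ∀ χ ∈ Φ, ∀ χ' ∈ Φ,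
            (∃ u : h, u ≠ 0 ∧ ∀ z, χ z = u * χ' z * u⁻¹) → χ = χ' := by
          rintro χ hχ χ' hχ' ⟨u, hu, hconj⟩
          have hcomm : ∀ a : h, (∀ g : G, g • a = a) → u * a = a * u := by
            intro a ha
            have h1 := hconj ⟨a, hkD ha⟩
            rw [hfixk χ hχ a ha, hfixk χ' hχ' a ha] at h1
            have h2 := congrArg (· * u) h1
            simp only [mul_assoc, inv_mul_cancel₀ hu, mul_one] at h2
            exact h2.symm
          have hcent := houter u hu hcomm
          ext z
          rw [hconj z, hcent (χ' z), mul_assoc, mul_inv_cancel₀ hu, mul_one]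
        obtain ⟨sR, hsRcard, hsRD, hspanR⟩ := span_right D Φ₀ hcov
        have hΦcard : Fintype.card ↥sR < Fintype.card ↥Φ := by
          simp only [Fintype.card_coe, hΦdef, Finset.card_insert_of_notMem hχ₀]
          omega
        obtain ⟨a, ⟨i₀, hi₀⟩, ha⟩ := exists_nonzero_solution (R := h) (ι₁ := ↥Φ)
          (ι₂ := ↥sR) hΦcard
          (fun z χ => (χ : ↥D →+* h) ⟨(z : h), hsRD z.2⟩)
        set a' : (↥D →+* h) → h := fun χ => if hχ : χ ∈ Φ then a ⟨χ, hχ⟩ else 0 with ha'def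
        have hsum : ∀ w : ↥D, ∑ χ ∈ Φ, a' χ * χ w = 0 := by
          intro w
          obtain ⟨c, hcfix, hw⟩ := hspanR w
          have hwD : w = ∑ z ∈ sR.attach,
              (⟨↑z, hsRD z.2⟩ * ⟨c ↑z, hkD (fun g => hcfix ↑z g)⟩ : ↥D) := by
            apply Subtype.ext
            rw [hw, ← Finset.sum_attach sR (fun z => z * c z)]
            simp only [AddSubmonoidClass.coe_finset_sum, MulMemClass.coe_mul]
          have hχw : ∀ χ ∈ Φ, χ w = ∑ z ∈ sR.attach, χ ⟨↑z, hsRD z.2⟩ * c ↑z := by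
            intro χ hχ
            rw [hwD, map_sum χ]
            refine Finset.sum_congr rfl fun z _ => ?_
            rw [map_mul, hfixk χ hχ (c ↑z) (fun g => hcfix ↑z g)]
          calc ∑ χ ∈ Φ, a' χ * χ w
              = ∑ χ ∈ Φ, ∑ z ∈ sR.attach, (a' χ * χ ⟨↑z, hsRD z.2⟩) * c ↑z := by
                refine Finset.sum_congr rfl fun χ hχ => ?_
                rw [hχw χ hχ, Finset.mul_sum]
                exact Finset.sum_congr rfl fun z _ => by rw [mul_assoc]
            _ = ∑ z ∈ sR.attach, (∑ χ ∈ Φ, a' χ * χ ⟨↑z, hsRD z.2⟩) * c ↑z := by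
                rw [Finset.sum_comm]
                exact Finset.sum_congr rfl fun z _ => by rw [Finset.sum_mul]
            _ = 0 := by
                refine Finset.sum_eq_zero fun z _ => ?_
                have hinner : ∑ χ ∈ Φ, a' χ * χ ⟨↑z, hsRD z.2⟩ = 0 := by
                  rw [← Finset.sum_attach Φ (fun χ => a' χ * χ ⟨↑z, hsRD z.2⟩)]
                  have := ha z
                  rw [← this]
                  refine Finset.sum_congr rfl fun χ _ => ?_
                  congr 1
                  simp only [ha'def, dif_pos χ.2]
                rw [hinner, zero_mul]
        have hzero := ringHom_indep Φ hrel a' hsum ↑i₀ i₀.2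
        rw [ha'def] at hzero
        simp only [dif_pos i₀.2] at hzero
        exact hi₀ hzero
    have hclosed : ∀ x : h, IsClosed {g : G | g • x = f x} := by
      intro x
      rw [← isOpen_compl_iff, isOpen_iff_mem_nhds]
      intro σ₀ hσ₀
      refine Filter.mem_of_superset
        ((fiber_open hopen x (σ₀ • x)).mem_nhds rfl) ?_
      intro σ hσ
      simp only [Set.mem_setOf_eq] at hσ
      simp only [Set.mem_compl_iff, Set.mem_setOf_eq] at hσ₀ ⊢
      rw [hσ]; exact hσ₀
    have hinter : (⋂ x : h, {g : G | g • x = f x}).Nonempty := by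
      by_contra hemp
      rw [Set.not_nonempty_iff_eq_empty] at hemp
      obtain ⟨t, ht⟩ := isCompact_univ.elim_finite_subfamily_closed _ hclosed
        (by rw [Set.univ_inter]; exact hemp)
      obtain ⟨g, hg⟩ := key t
      have : g ∈ Set.univ ∩ ⋂ x ∈ t, {g : G | g • x = f x} :=
        ⟨trivial, Set.mem_iInter₂.2 fun x hx => hg x hx⟩
      rw [ht] at this
      exact this
    obtain ⟨g, hg⟩ := hinter
    have hg' : ∀ x : h, g • x = f x := fun x => Set.mem_iInter.1 hg x
    refine ⟨g, fun x => (hg' x).symm, fun g' hg'' => ?_⟩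
    have hgg : ∀ x : h, (g⁻¹ * g') • x = x := by
      intro x
      rw [mul_smul, ← hg'' x, ← hg' x, ← mul_smul, inv_mul_cancel, one_smul]
    have h1 := hfaithful _ hgg
    have h2 : g = g' := inv_mul_eq_one.mp h1
    exact h2.symm
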